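/- Let m ≥ 2 and let μ(K_{1,m}) be the Mycielskian of the star K_{1,m}, with root w and with u₀ the shadow vertex of the unique vertex of maximum degree in K_{1,m}. Then every automorphism φ of μ(K_{1,m}) satisfies φ(w) ∈ {w, u₀}. -/

import Mathlib

open SimpleGraph Finset

universe u

/-- A distinguishing edge coloring: no nontrivial automorphism preserves the coloring. -/
def IsDistEdgeColoring {V : Type u} (G : SimpleGraph V) {C : Type*} (c : G.edgeSet → C) : Prop :=
  ∀ φ : G ≃g G, (∀ e : G.edgeSet, c (φ.mapEdgeSet e) = c e) → ∀ v, φ v = v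

/-- The distinguishing index: least number of colors in a distinguishing edge coloring. -/
noncomputable def distIndex {V : Type u} (G : SimpleGraph V) : ℕ :=
  sInf {k : ℕ | ∃ c : G.edgeSet → Fin k, IsDistEdgeColoring G c}

/-- The star `K_{1,m}` with center `0`. -/
def starGraph (m : ℕ) : SimpleGraph (Fin (m + 1)) :=
  SimpleGraph.fromRel fun a _ => a = 0

/-- The Mycielskian: `Sum.inl a` are original vertices, `Sum.inr (Sum.inl a)` their
shadows, and `Sum.inr (Sum.inr _)` the root. -/
def myc {V : Type u} (G : SimpleGraph V) : SimpleGraph (V ⊕ V ⊕ PUnit.{u+1}) :=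
  SimpleGraph.fromRel fun x y =>
    match x, y with
    | Sum.inl a, Sum.inl b => G.Adj a b
    | Sum.inl a, Sum.inr (Sum.inl b) => G.Adj a b
    | Sum.inr (Sum.inl _), Sum.inr (Sum.inr _) => True
    | _, _ => False

/-- The generalized Mycielskian with `t` extra levels: `Sum.inl (j, a)` is the level-`j`
copy of vertex `a` (level `0` being the original vertices), and `Sum.inr _` is the root. -/
def genMyc {V : Type u} (G : SimpleGraph V) (t : ℕ) :
    SimpleGraph ((Fin (t + 1) × V) ⊕ PUnit.{u+1}) :=
  SimpleGraph.fromRel fun x y =>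
    match x, y with
    | Sum.inl (j, a), Sum.inl (k, b) =>
        ((j.val = 0 ∧ k.val = 0) ∨ k.val = j.val + 1) ∧ G.Adj a b
    | Sum.inl (j, _), Sum.inr _ => j.val = t
    | _, _ => False

open scoped Classical in
noncomputable def mycDeg (m : ℕ) (x : Fin (m+1) ⊕ Fin (m+1) ⊕ PUnit) : ℕ :=
  (Finset.univ.filter (fun y => (myc (_root_.starGraph m)).Adj x y)).card

open scoped Classical in
lemma mycDeg_iso (m : ℕ) (φ : myc (_root_.starGraph m) ≃g myc (_root_.starGraph m)) (x) :
    mycDeg m (φ x) = mycDeg m x := by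
  classical
  unfold mycDeg
  refine Finset.card_bij' (fun y _ => φ.symm y) (fun y _ => φ y) ?_ ?_ ?_ ?_
  · intro y hy
    simp only [mem_filter, mem_univ, true_and] at hy ⊢
    exact φ.map_adj_iff.mp (by simpa using hy)
  · intro y hy
    simp only [mem_filter, mem_univ, true_and] at hy ⊢
    exact φ.map_adj_iff.mpr hy
  · intro y _; simp
  · intro y _; simp

open scoped Classical in
lemma mycDeg_root (m : ℕ) : mycDeg m (Sum.inr (Sum.inr PUnit.unit)) = m + 1 := by
  classical
  unfold mycDeg
  have : (Finset.univ.filter (fun y => (myc (_root_.starGraph m)).Adj (Sum.inr (Sum.inr PUnit.unit)) y))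
      = Finset.univ.image (fun a : Fin (m+1) => Sum.inr (Sum.inl a)) := by
    ext y
    rcases y with a | a | u <;> simp [myc, _root_.starGraph]
  rw [this, Finset.card_image_of_injective _ (by intro a b h; simpa using h)]
  simp

open scoped Classical in
lemma mycDeg_u0 (m : ℕ) : mycDeg m (Sum.inr (Sum.inl 0)) = m + 1 := by
  classical
  unfold mycDeg
  have : (Finset.univ.filter (fun y => (myc (_root_.starGraph m)).Adj (Sum.inr (Sum.inl 0)) y))
      = insert (Sum.inr (Sum.inr PUnit.unit))
          ((Finset.univ.erase (0 : Fin (m+1))).image (fun a => Sum.inl a)) := by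
    ext y
    rcases y with a | a | u <;> simp [myc, _root_.starGraph, eq_comm (a := (0 : Fin (m+1)))]
  rw [this, Finset.card_insert_of_notMem (by simp),
    Finset.card_image_of_injective _ (by intro a b h; simpa using h)]
  simp [Finset.card_erase_of_mem]

open scoped Classical in
lemma mycDeg_v0 (m : ℕ) : mycDeg m (Sum.inl 0) = 2 * m := by
  classical
  unfold mycDeg
  have : (Finset.univ.filter (fun y => (myc (_root_.starGraph m)).Adj (Sum.inl 0) y))
      = ((Finset.univ.erase (0 : Fin (m+1))).image (fun a => Sum.inl a)) ∪
        ((Finset.univ.erase (0 : Fin (m+1))).image (fun a => Sum.inr (Sum.inl a))) := by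
    ext y
    rcases y with a | a | u <;> simp [myc, _root_.starGraph, eq_comm (a := (0 : Fin (m+1)))]
  rw [this, Finset.card_union_of_disjoint (by simp [Finset.disjoint_left]),
    Finset.card_image_of_injective _ (by intro a b h; simpa using h),
    Finset.card_image_of_injective _ (by intro a b h; simpa using h)]
  simp [Finset.card_erase_of_mem]; ring

open scoped Classical in
lemma mycDeg_leaf (m : ℕ) (a : Fin (m+1)) (ha : a ≠ 0) : mycDeg m (Sum.inl a) = 2 := by
  classical
  unfold mycDeg
  have : (Finset.univ.filter (fun y => (myc (_root_.starGraph m)).Adj (Sum.inl a) y))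
      = {Sum.inl 0, Sum.inr (Sum.inl 0)} := by
    ext y
    rcases y with b | b | u <;> simp [myc, _root_.starGraph, ha] <;> aesop
  rw [this]
  simp

open scoped Classical in
lemma mycDeg_shadow (m : ℕ) (a : Fin (m+1)) (ha : a ≠ 0) :
    mycDeg m (Sum.inr (Sum.inl a)) = 2 := by
  classical
  unfold mycDeg
  have : (Finset.univ.filter (fun y => (myc (_root_.starGraph m)).Adj (Sum.inr (Sum.inl a)) y))
      = {Sum.inl 0, Sum.inr (Sum.inr PUnit.unit)} := by
    ext y
    rcases y with b | b | u <;> simp [myc, _root_.starGraph, ha] <;> aesop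
  rw [this]
  simp

theorem myc_star_root_image (m : ℕ) (hm : 2 ≤ m)
    (φ : myc (_root_.starGraph m) ≃g myc (_root_.starGraph m)) :
    φ (Sum.inr (Sum.inr PUnit.unit)) = Sum.inr (Sum.inr PUnit.unit) ∨
      φ (Sum.inr (Sum.inr PUnit.unit)) = Sum.inr (Sum.inl 0) := by
  have key := mycDeg_iso m φ (Sum.inr (Sum.inr PUnit.unit))
  rw [mycDeg_root] at key
  rcases h : φ (Sum.inr (Sum.inr PUnit.unit)) with a | a | u
  · rw [h] at key
    by_cases ha : a = 0
    · subst ha; rw [mycDeg_v0] at key; omega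
    · rw [mycDeg_leaf m a ha] at key; omega
  · by_cases ha : a = 0
    · subst ha; right; rfl
    · rw [h, mycDeg_shadow m a ha] at key; omega
  · left; rfl
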